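/- Let Q : X → M_n(ℂ) be smooth with Q² = Q. Then for every p ≥ 1, the 2p-form Trace(Q(dQ)^{2p}) is closed. -/

import Mathlib

/-- A graded differential algebra (such as the differential forms on a
manifold): a ℂ-algebra with a grading `𝒜` and a differential `d` of degree one
squaring to zero and satisfying the graded Leibniz rule. -/
structure GradedDGA (A : Type*) [Ring A] [Algebra ℂ A]
    (𝒜 : ℕ → Submodule ℂ A) where
  d : A →ₗ[ℂ] A
  d_mem : ∀ (n : ℕ), ∀ a ∈ 𝒜 n, d a ∈ 𝒜 (n + 1)
  d_sq : ∀ a : A, d (d a) = 0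
  leibniz : ∀ (p : ℕ), ∀ a ∈ 𝒜 p, ∀ b : A,
    d (a * b) = d a * b + ((-1 : ℂ) ^ p) • (a * d b)

/-- Entrywise differential on matrices over a graded differential algebra. -/
def matD {A : Type*} [Ring A] [Algebra ℂ A] {𝒜 : ℕ → Submodule ℂ A}
    (D : GradedDGA A 𝒜) {n : ℕ} (M : Matrix (Fin n) (Fin n) A) :
    Matrix (Fin n) (Fin n) A :=
  Matrix.of fun a b => D.d (M a b)

section Helpers

variable {A : Type*} [Ring A] [Algebra ℂ A] {𝒜 : ℕ → Submodule ℂ A}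
  (D : GradedDGA A 𝒜) {n : ℕ}

lemma matD_mul (p : ℕ) (M N : Matrix (Fin n) (Fin n) A)
    (hM : ∀ a b, M a b ∈ 𝒜 p) :
    matD D (M * N) = matD D M * N + ((-1:ℂ)^p) • (M * matD D N) := by
  ext a b
  simp only [matD, Matrix.of_apply, Matrix.add_apply, Matrix.smul_apply,
    Matrix.mul_apply, map_sum, Finset.smul_sum, ← Finset.sum_add_distrib]
  exact Finset.sum_congr rfl fun j _ => D.leibniz p (M a j) (hM a j) (N j b)

lemma trace_matD (M : Matrix (Fin n) (Fin n) A) :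
    D.d (Matrix.trace M) = Matrix.trace (matD D M) := by
  simp [Matrix.trace, Matrix.diag, matD, map_sum]

lemma trace_mul_comm' (M N : Matrix (Fin n) (Fin n) A)
    (h : ∀ a b i j, N a b * M i j = M i j * N a b) :
    Matrix.trace (M * N) = Matrix.trace (N * M) := by
  have key : ∀ (X Y : Matrix (Fin n) (Fin n) A),
      Matrix.trace (X * Y) = ∑ i, ∑ j, X i j * Y j i := by
    intro X Y; simp [Matrix.trace, Matrix.diag, Matrix.mul_apply]
  rw [key, key, Finset.sum_comm]
  exact Finset.sum_congr rfl fun j _ => Finset.sum_congr rfl fun i _ => (h j i i j).symm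

lemma comm_mul {c : A} {M N : Matrix (Fin n) (Fin n) A}
    (hM : ∀ i j, c * M i j = M i j * c) (hN : ∀ i j, c * N i j = N i j * c) :
    ∀ i j, c * (M * N) i j = (M * N) i j * c := by
  intro i j
  simp only [Matrix.mul_apply, Finset.mul_sum, Finset.sum_mul]
  refine Finset.sum_congr rfl fun k _ => ?_
  rw [← mul_assoc, hM, mul_assoc, hN, ← mul_assoc]

lemma anticomm_mul {c : A} {M N : Matrix (Fin n) (Fin n) A}
    (hM : ∀ i j, c * M i j = -(M i j * c)) (hN : ∀ i j, c * N i j = -(N i j * c)) :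
    ∀ i j, c * (M * N) i j = (M * N) i j * c := by
  intro i j
  simp only [Matrix.mul_apply, Finset.mul_sum, Finset.sum_mul]
  refine Finset.sum_congr rfl fun k _ => ?_
  rw [← mul_assoc, hM, neg_mul, mul_assoc, hN, mul_neg, neg_neg, mul_assoc]

lemma comm_pow {c : A} {M : Matrix (Fin n) (Fin n) A}
    (hM : ∀ i j, c * M i j = M i j * c) :
    ∀ (k : ℕ) i j, c * (M ^ k) i j = (M ^ k) i j * c := by
  intro k
  induction k with
  | zero =>
      intro i j
      simp only [pow_zero, Matrix.one_apply]
      split_ifs <;> simp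
  | succ k ih =>
      rw [pow_succ]
      exact comm_mul ih hM

end Helpers

section Key

variable {A : Type*} [Ring A] [Algebra ℂ A] {𝒜 : ℕ → Submodule ℂ A}

lemma key (D : GradedDGA A 𝒜)
    (hcomm : ∀ (p q : ℕ), ∀ a ∈ 𝒜 p, ∀ b ∈ 𝒜 q,
      a * b = ((-1 : ℂ) ^ (p * q)) • (b * a))
    {n : ℕ} (Q P : Matrix (Fin n) (Fin n) A)
    (hQ0 : ∀ a b, Q a b ∈ 𝒜 0) (hP1 : ∀ a b, P a b ∈ 𝒜 1)
    (hidem : Q * Q = Q) (hrel : P * Q + Q * P = P)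
    (hdQ : matD D Q = P)
    (hdP : matD D P = 0) (p : ℕ) (hp : 1 ≤ p) :
    D.d (Matrix.trace (Q * P ^ (2 * p))) = 0 := by
  -- entrywise (anti)commutation facts
  have hPP : ∀ a b i j, P a b * P i j = -(P i j * P a b) := fun a b i j => by
    simpa using hcomm 1 1 _ (hP1 a b) _ (hP1 i j)
  have hPQ : ∀ a b i j, P a b * Q i j = Q i j * P a b := fun a b i j => by
    simpa using hcomm 1 0 _ (hP1 a b) _ (hQ0 i j)
  have hQP : ∀ a b i j, Q a b * P i j = P i j * Q a b := fun a b i j =>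
    (hPQ i j a b).symm
  have hQQ : ∀ a b i j, Q a b * Q i j = Q i j * Q a b := fun a b i j => by
    simpa using hcomm 0 0 _ (hQ0 a b) _ (hQ0 i j)
  -- differential of powers of P vanishes
  have hdPk : ∀ k, matD D (P ^ (k + 1)) = 0 := by
    intro k
    induction k with
    | zero => simpa using hdP
    | succ k ih =>
        rw [pow_succ' P (k + 1), matD_mul D 1 P (P ^ (k + 1)) hP1, hdP, ih]
        simp
  -- algebraic consequences of the relation
  have h1 : Q * P = P - P * Q := eq_sub_of_add_eq' hrel
  have hQPQ : Q * P * Q = 0 := by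
    have h2 : Q * (P * Q) + Q * (Q * P) = Q * P := by rw [← mul_add, hrel]
    rw [← mul_assoc, ← mul_assoc, hidem] at h2
    exact add_eq_right.mp h2
  have hQP2 : Q * (P * P) = (P * P) * Q := by
    rw [← mul_assoc, h1, sub_mul, mul_assoc P Q P, h1, mul_sub,
      sub_sub_cancel, ← mul_assoc]

  have hpow : P ^ (2 * p) = (P * P) ^ p := by rw [pow_mul, pow_two]
  have hQcommPow : Q * P ^ (2 * p) = P ^ (2 * p) * Q := by
    rw [hpow]
    exact (Commute.pow_right (a := Q) (b := P * P) hQP2 p)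
  -- commutation of P-entries with P^(2p) * Q
  have hcommP : ∀ a b i j,
      P a b * (P ^ (2 * p) * Q) i j = (P ^ (2 * p) * Q) i j * P a b := by
    intro a b
    rw [hpow]
    exact comm_mul (comm_pow (anticomm_mul (hPP a b) (hPP a b)) p) (hPQ a b)
  -- commutation of Q-entries with P^(2p+1) * Q
  have hcommQ : ∀ a b i j,
      Q a b * (P ^ (2 * p + 1) * Q) i j = (P ^ (2 * p + 1) * Q) i j * Q a b :=
    fun a b => comm_mul (comm_pow (hQP a b) (2 * p + 1)) (hQQ a b)
  -- reduce to trace of P^(2p+1)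
  rw [trace_matD]
  have hd1 : matD D (Q * P ^ (2 * p)) = P ^ (2 * p + 1) := by
    obtain ⟨m, hm⟩ : ∃ m, 2 * p = m + 1 := ⟨2 * p - 1, by omega⟩
    rw [matD_mul D 0 Q _ hQ0, hm, hdPk m, pow_succ' P (m + 1), hdQ]
    simp
  rw [hd1]
  -- the key trace S = trace(P^(2p+1) Q) vanishes
  have hS : Matrix.trace (P ^ (2 * p + 1) * Q) = 0 := by
    have e1 : P ^ (2 * p + 1) * Q = (P ^ (2 * p + 1) * Q) * Q := by
      rw [mul_assoc, hidem]
    rw [e1, trace_mul_comm' _ _ (fun a b i j => hcommQ a b i j)]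
    have hzero : Q * (P ^ (2 * p + 1) * Q) = 0 := by
      calc Q * (P ^ (2 * p + 1) * Q)
          = (Q * P ^ (2 * p)) * (P * Q) := by rw [pow_succ]; noncomm_ring
        _ = (P ^ (2 * p) * Q) * (P * Q) := by rw [hQcommPow]
        _ = P ^ (2 * p) * (Q * P * Q) := by noncomm_ring
        _ = 0 := by rw [hQPQ, mul_zero]
    rw [hzero, Matrix.trace_zero]
  -- split P^(2p+1) using the relation
  have hsplit : P ^ (2 * p + 1)
      = P ^ (2 * p) * (P * Q) + (P ^ (2 * p) * Q) * P := by
    have : P ^ (2 * p) * P = P ^ (2 * p) * (P * Q + Q * P) := by rw [hrel]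
    rw [pow_succ, this]
    noncomm_ring
  rw [hsplit, Matrix.trace_add]
  have t1 : Matrix.trace (P ^ (2 * p) * (P * Q))
      = Matrix.trace (P ^ (2 * p + 1) * Q) := by
    rw [← mul_assoc, ← pow_succ]
  have t2 : Matrix.trace ((P ^ (2 * p) * Q) * P)
      = Matrix.trace (P ^ (2 * p + 1) * Q) := by
    rw [trace_mul_comm' _ _ (fun a b i j => hcommP a b i j), ← mul_assoc,
      ← pow_succ' P (2 * p)]
  rw [t1, t2, hS, add_zero]

end Key

/-- For an idempotent matrix `Q` of functions (degree-0 elements of a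
graded-commutative algebra of forms), the form `Trace (Q (dQ)^{2p})` is closed
for every `p ≥ 1`. -/
theorem trace_QdQpow_closed {A : Type*} [Ring A] [Algebra ℂ A]
    {𝒜 : ℕ → Submodule ℂ A} (D : GradedDGA A 𝒜)
    (hcomm : ∀ (p q : ℕ), ∀ a ∈ 𝒜 p, ∀ b ∈ 𝒜 q,
      a * b = ((-1 : ℂ) ^ (p * q)) • (b * a))
    {n : ℕ} (Q : Matrix (Fin n) (Fin n) A) (hQ0 : ∀ a b, Q a b ∈ 𝒜 0)
    (hidem : Q * Q = Q) (p : ℕ) (hp : 1 ≤ p) :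
    D.d (Matrix.trace (Q * (matD D Q) ^ (2 * p))) = 0 := by
  have hP1 : ∀ a b, (matD D Q) a b ∈ 𝒜 1 := fun a b => by
    simpa [matD] using D.d_mem 0 _ (hQ0 a b)
  have hdP : matD D (matD D Q) = 0 := by
    ext a b
    simpa [matD] using D.d_sq (Q a b)
  have hrel : matD D Q * Q + Q * matD D Q = matD D Q := by
    have h := matD_mul D 0 Q Q hQ0
    rw [hidem] at h
    simpa using h.symm
  exact key D hcomm Q (matD D Q) hQ0 hP1 hidem hrel rfl hdP p hp
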